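/- The unweighted least squares additive approximation of a cooperative game recovers the Banzhaf values: the coefficients a_0 = 2^{-d} Σ_{S⊆D} u(S) − (1/2) Σ_j ψ_j(u) and a_i = ψ_i(u) (the Banzhaf values) are the unique minimizers of L(b_0,…,b_d) = Σ_{S⊆D} (b_0 + Σ_{i∈S} b_i − u(S))². -/

import Mathlib

open Finset

/-- The Banzhaf value of player `i`. -/
noncomputable def banzhaf (d : ℕ) (u : Finset (Fin d) → ℝ) (i : Fin d) : ℝ :=
  (1 / (2 : ℝ) ^ (d - 1)) * ∑ S ∈ (univ \ {i}).powerset, (u (insert i S) - u S)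

/-- The unweighted least squares objective for an additive model `b₀ + Σ_{i ∈ S} bᵢ`. -/
noncomputable def lsObjective (d : ℕ) (u : Finset (Fin d) → ℝ)
    (b0 : ℝ) (b : Fin d → ℝ) : ℝ :=
  ∑ S ∈ (univ : Finset (Fin d)).powerset, (b0 + ∑ i ∈ S, b i - u S) ^ 2

namespace BLS

variable {d : ℕ}

noncomputable def chi (i : Fin d) (S : Finset (Fin d)) : ℝ :=
  (if i ∈ S then 1 else 0) - 1/2

lemma pair (i : Fin d) (f : Finset (Fin d) → ℝ) :
    ∑ S ∈ (univ : Finset (Fin d)).powerset, f S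
      = ∑ T ∈ (univ \ {i}).powerset, (f T + f (insert i T)) := by
  have h1 : (univ : Finset (Fin d)) = insert i (univ \ {i}) := by
    ext j
    by_cases h : j = i <;> simp [h]
  have h2 : i ∉ (univ \ {i} : Finset (Fin d)) := by simp
  conv_lhs => rw [h1]
  rw [Finset.sum_powerset_insert h2, ← Finset.sum_add_distrib]

lemma not_mem_of_mem_pow {i : Fin d} {T : Finset (Fin d)}
    (hT : T ∈ (univ \ {i} : Finset (Fin d)).powerset) : i ∉ T := by
  rw [mem_powerset] at hT
  intro h
  have := hT h
  simp at this

lemma card_pow (i : Fin d) :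
    ((univ \ {i} : Finset (Fin d)).powerset.card : ℝ) = (2:ℝ)^(d-1) := by
  rw [card_powerset, card_sdiff_of_subset (by simp)]
  simp

lemma two_pow_pred (i : Fin d) : (2:ℝ)^(d-1) * 2 = (2:ℝ)^d := by
  have hd : d - 1 + 1 = d := Nat.succ_pred_eq_of_pos i.pos
  rw [← pow_succ, hd]

lemma sum_chi (i : Fin d) :
    ∑ S ∈ (univ : Finset (Fin d)).powerset, chi i S = 0 := by
  rw [pair i]
  apply Finset.sum_eq_zero
  intro T hT
  have h := not_mem_of_mem_pow hT
  have h1 : chi i T = -(1/2) := by norm_num [chi, h]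
  have h2 : chi i (insert i T) = 1/2 := by norm_num [chi]
  rw [h1, h2]; ring

lemma sum_chi_chi (i j : Fin d) :
    ∑ S ∈ (univ : Finset (Fin d)).powerset, chi i S * chi j S
      = if i = j then (2:ℝ)^(d-1)/2 else 0 := by
  rw [pair i]
  by_cases hij : i = j
  · subst hij
    simp only [if_pos rfl]
    have hterm : ∀ T ∈ (univ \ {i} : Finset (Fin d)).powerset,
        chi i T * chi i T + chi i (insert i T) * chi i (insert i T) = 1/2 := by
      intro T hT
      have h := not_mem_of_mem_pow hT
      have h1 : chi i T = -(1/2) := by norm_num [chi, h]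
      have h2 : chi i (insert i T) = 1/2 := by norm_num [chi]
      rw [h1, h2]; norm_num
    rw [Finset.sum_congr rfl hterm, Finset.sum_const, nsmul_eq_mul, card_pow]
    norm_num
    ring
  · rw [if_neg hij]
    apply Finset.sum_eq_zero
    intro T hT
    have h := not_mem_of_mem_pow hT
    have hji : j ≠ i := fun h' => hij h'.symm
    have h3 : chi j (insert i T) = chi j T := by
      simp [chi, Finset.mem_insert, hji]
    have h1 : chi i T = -(1/2) := by norm_num [chi, h]
    have h2 : chi i (insert i T) = 1/2 := by norm_num [chi]
    rw [h1, h2, h3]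
    ring

lemma sum_chi_u (u : Finset (Fin d) → ℝ) (i : Fin d) :
    ∑ S ∈ (univ : Finset (Fin d)).powerset, chi i S * u S
      = ((2:ℝ)^(d-1)/2) * banzhaf d u i := by
  rw [pair i]
  have : ∀ T ∈ (univ \ {i} : Finset (Fin d)).powerset,
      chi i T * u T + chi i (insert i T) * u (insert i T)
        = (1/2) * (u (insert i T) - u T) := by
    intro T hT
    have h := not_mem_of_mem_pow hT
    have h1 : chi i T = -(1/2) := by norm_num [chi, h]
    have h2 : chi i (insert i T) = 1/2 := by norm_num [chi]
    rw [h1, h2]; ring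
  rw [Finset.sum_congr rfl this, ← Finset.mul_sum, banzhaf]
  have hp : (2:ℝ)^(d-1) ≠ 0 := by positivity
  field_simp

lemma card_univ_pow :
    (((univ : Finset (Fin d)).powerset.card : ℝ)) = (2:ℝ)^d := by
  rw [card_powerset]
  simp

/-- Master expansion lemma. -/
lemma sum_sq_expand (c0 : ℝ) (e : Fin d → ℝ) (r : Finset (Fin d) → ℝ)
    (hr : ∑ S ∈ (univ : Finset (Fin d)).powerset, r S = 0)
    (hcr : ∀ i, ∑ S ∈ (univ : Finset (Fin d)).powerset, chi i S * r S = 0) :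
    ∑ S ∈ (univ : Finset (Fin d)).powerset, (c0 + (∑ i, e i * chi i S) + r S) ^ 2
      = (2:ℝ)^d * c0^2 + ((2:ℝ)^(d-1)/2) * (∑ i, (e i)^2)
        + ∑ S ∈ (univ : Finset (Fin d)).powerset, (r S)^2 := by
  have expand : ∀ S ∈ (univ : Finset (Fin d)).powerset,
      (c0 + (∑ i, e i * chi i S) + r S) ^ 2
        = c0^2 + (∑ i, ∑ j, (e i * e j) * (chi i S * chi j S)) + (r S)^2
          + (∑ i, (2*c0*e i) * chi i S) + 2*c0*(r S) + (∑ i, (2*e i)*(chi i S * r S)) := by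
    intro S _
    have h1 : (∑ i, e i * chi i S) * (∑ j, e j * chi j S)
        = ∑ i, ∑ j, (e i * e j) * (chi i S * chi j S) := by
      rw [Finset.sum_mul_sum]
      apply Finset.sum_congr rfl; intro i _
      apply Finset.sum_congr rfl; intro j _
      ring
    have h2 : (∑ i, (2*c0*e i) * chi i S) = 2*c0*(∑ i, e i * chi i S) := by
      simp only [Finset.mul_sum]
      apply Finset.sum_congr rfl; intro i _; ring
    have h3 : (∑ i, (2*e i)*(chi i S * r S)) = 2*(∑ i, e i * chi i S)*(r S) := by
      simp only [Finset.mul_sum, Finset.sum_mul]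
      apply Finset.sum_congr rfl; intro i _; ring
    rw [h2, h3, ← h1]
    ring
  rw [Finset.sum_congr rfl expand]
  rw [Finset.sum_add_distrib, Finset.sum_add_distrib, Finset.sum_add_distrib,
    Finset.sum_add_distrib, Finset.sum_add_distrib]
  have t1 : ∑ S ∈ (univ : Finset (Fin d)).powerset, c0^2 = (2:ℝ)^d * c0^2 := by
    rw [Finset.sum_const, nsmul_eq_mul, card_univ_pow]
  have t2 : ∑ S ∈ (univ : Finset (Fin d)).powerset,
      (∑ i, ∑ j, (e i * e j) * (chi i S * chi j S))
        = ((2:ℝ)^(d-1)/2) * (∑ i, (e i)^2) := by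
    rw [Finset.sum_comm]
    rw [Finset.mul_sum]
    apply Finset.sum_congr rfl; intro i _
    rw [Finset.sum_comm]
    have : ∀ j ∈ (univ : Finset (Fin d)),
        ∑ S ∈ (univ : Finset (Fin d)).powerset, (e i * e j) * (chi i S * chi j S)
          = (e i * e j) * (if i = j then (2:ℝ)^(d-1)/2 else 0) := by
      intro j _
      rw [← Finset.mul_sum, sum_chi_chi]
    rw [Finset.sum_congr rfl this]
    simp only [mul_ite, mul_zero]
    rw [Finset.sum_ite_eq univ i (fun j => e i * e j * ((2:ℝ)^(d-1)/2))]
    simp only [mem_univ, if_pos]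
    ring
  have t4 : ∑ S ∈ (univ : Finset (Fin d)).powerset, (∑ i, (2*c0*e i) * chi i S) = 0 := by
    rw [Finset.sum_comm]
    apply Finset.sum_eq_zero; intro i _
    rw [← Finset.mul_sum, sum_chi, mul_zero]
  have t5 : ∑ S ∈ (univ : Finset (Fin d)).powerset, 2*c0*(r S) = 0 := by
    rw [← Finset.mul_sum, hr, mul_zero]
  have t6 : ∑ S ∈ (univ : Finset (Fin d)).powerset, (∑ i, (2*e i)*(chi i S * r S)) = 0 := by
    rw [Finset.sum_comm]
    apply Finset.sum_eq_zero; intro i _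
    rw [← Finset.mul_sum, hcr, mul_zero]
  rw [t1, t2, t4, t5, t6]
  ring

lemma sum_mem_eq (b : Fin d → ℝ) (S : Finset (Fin d)) :
    ∑ i ∈ S, b i = (1/2) * (∑ i, b i) + ∑ i, b i * chi i S := by
  have h1 : ∑ i, b i * chi i S = (∑ i, b i * (if i ∈ S then 1 else 0)) - (1/2) * ∑ i, b i := by
    simp only [chi]
    rw [Finset.mul_sum, ← Finset.sum_sub_distrib]
    apply Finset.sum_congr rfl; intro i _; ring
  have h2 : (∑ i, b i * (if i ∈ S then (1:ℝ) else 0)) = ∑ i ∈ S, b i := by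
    simp only [mul_ite, mul_one, mul_zero]
    rw [Finset.sum_ite_mem]
    congr 1
    exact Finset.univ_inter S
  rw [h1, h2]; ring

end BLS

open BLS

/-- The unweighted least squares additive approximation of a cooperative game recovers the
Banzhaf values: `a₀ = 2^{-d} Σ_S u(S) - (1/2) Σ_j ψ_j(u)` and `aᵢ = ψ_i(u)` are the unique
minimizers. -/
theorem banzhaf_least_squares (d : ℕ) (u : Finset (Fin d) → ℝ)
    (a0 : ℝ) (a : Fin d → ℝ)
    (ha0 : a0 = (1 / (2 : ℝ) ^ d) * (∑ S ∈ (univ : Finset (Fin d)).powerset, u S)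
      - (1 / 2) * ∑ j : Fin d, banzhaf d u j)
    (ha : ∀ i : Fin d, a i = banzhaf d u i) :
    ∀ b0 : ℝ, ∀ b : Fin d → ℝ,
      lsObjective d u a0 a ≤ lsObjective d u b0 b ∧
      (lsObjective d u b0 b = lsObjective d u a0 a → b0 = a0 ∧ ∀ i, b i = a i) := by
  set m : ℝ := (1 / (2 : ℝ) ^ d) * (∑ S ∈ (univ : Finset (Fin d)).powerset, u S) with hm
  set ψ : Fin d → ℝ := banzhaf d u with hψ
  set r : Finset (Fin d) → ℝ := fun S => m + (∑ j, ψ j * chi j S) - u S with hrdef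
  have hp : (2:ℝ)^d ≠ 0 := by positivity
  have hr : ∑ S ∈ (univ : Finset (Fin d)).powerset, r S = 0 := by
    simp only [hrdef]
    rw [Finset.sum_sub_distrib, Finset.sum_add_distrib]
    have h1 : ∑ S ∈ (univ : Finset (Fin d)).powerset, m = (2:ℝ)^d * m := by
      rw [Finset.sum_const, nsmul_eq_mul, card_univ_pow]
    have h2 : ∑ S ∈ (univ : Finset (Fin d)).powerset, (∑ j, ψ j * chi j S) = 0 := by
      rw [Finset.sum_comm]
      apply Finset.sum_eq_zero; intro j _
      rw [← Finset.mul_sum, sum_chi, mul_zero]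
    rw [h1, h2, hm]
    field_simp
    ring
  have hcr : ∀ i, ∑ S ∈ (univ : Finset (Fin d)).powerset, chi i S * r S = 0 := by
    intro i
    simp only [hrdef]
    have : ∀ S ∈ (univ : Finset (Fin d)).powerset,
        chi i S * (m + (∑ j, ψ j * chi j S) - u S)
          = m * chi i S + (∑ j, ψ j * (chi i S * chi j S)) - chi i S * u S := by
      intro S _
      have hs : ∑ j, ψ j * (chi i S * chi j S) = chi i S * ∑ j, ψ j * chi j S := by
        rw [Finset.mul_sum]
        apply Finset.sum_congr rfl; intro j _; ring
      rw [hs]; ring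
    rw [Finset.sum_congr rfl this, Finset.sum_sub_distrib, Finset.sum_add_distrib]
    rw [← Finset.mul_sum, sum_chi, mul_zero, sum_chi_u]
    have h2 : ∑ S ∈ (univ : Finset (Fin d)).powerset, (∑ j, ψ j * (chi i S * chi j S))
        = ((2:ℝ)^(d-1)/2) * ψ i := by
      rw [Finset.sum_comm]
      have : ∀ j ∈ (univ : Finset (Fin d)),
          ∑ S ∈ (univ : Finset (Fin d)).powerset, ψ j * (chi i S * chi j S)
            = ψ j * (if i = j then (2:ℝ)^(d-1)/2 else 0) := by
        intro j _
        rw [← Finset.mul_sum, sum_chi_chi]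
      rw [Finset.sum_congr rfl this]
      simp only [mul_ite, mul_zero]
      rw [Finset.sum_ite_eq univ i (fun j => ψ j * ((2:ℝ)^(d-1)/2))]
      simp only [mem_univ, if_pos]
      ring
    rw [h2, hψ]
    ring
  -- the key formula
  have key : ∀ (b0 : ℝ) (b : Fin d → ℝ),
      lsObjective d u b0 b
        = (2:ℝ)^d * (b0 + (1/2) * (∑ i, b i) - m)^2
          + ((2:ℝ)^(d-1)/2) * (∑ i, (b i - ψ i)^2)
          + ∑ S ∈ (univ : Finset (Fin d)).powerset, (r S)^2 := by
    intro b0 b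
    rw [lsObjective]
    have hptw : ∀ S ∈ (univ : Finset (Fin d)).powerset,
        (b0 + ∑ i ∈ S, b i - u S) ^ 2
          = ((b0 + (1/2) * (∑ i, b i) - m) + (∑ i, (b i - ψ i) * chi i S) + r S) ^ 2 := by
      intro S _
      congr 1
      rw [sum_mem_eq b S, hrdef]
      simp only
      have : ∑ i, (b i - ψ i) * chi i S = (∑ i, b i * chi i S) - ∑ i, ψ i * chi i S := by
        rw [← Finset.sum_sub_distrib]
        apply Finset.sum_congr rfl; intro i _; ring
      rw [this]
      ring
    rw [Finset.sum_congr rfl hptw]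
    rw [sum_sq_expand _ _ _ hr hcr]
  intro b0 b
  have hca : a0 + (1/2) * (∑ i, a i) - m = 0 := by
    rw [ha0]
    have : ∑ i, a i = ∑ j, ψ j := Finset.sum_congr rfl (fun i _ => ha i)
    rw [this]
    ring
  have hea : ∀ i, a i - ψ i = 0 := fun i => by rw [ha i]; ring
  have hLa : lsObjective d u a0 a = ∑ S ∈ (univ : Finset (Fin d)).powerset, (r S)^2 := by
    rw [key a0 a, hca]
    have : (∑ i, (a i - ψ i)^2) = 0 := by
      apply Finset.sum_eq_zero; intro i _; rw [hea i]; ring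
    rw [this]
    ring
  have hnn1 : (0:ℝ) ≤ (2:ℝ)^d * (b0 + (1/2) * (∑ i, b i) - m)^2 := by positivity
  have hnn2 : (0:ℝ) ≤ ((2:ℝ)^(d-1)/2) * (∑ i, (b i - ψ i)^2) := by positivity
  constructor
  · rw [hLa, key b0 b]
    linarith
  · intro heq
    rw [hLa, key b0 b] at heq
    have hzero : (2:ℝ)^d * (b0 + (1/2) * (∑ i, b i) - m)^2
        + ((2:ℝ)^(d-1)/2) * (∑ i, (b i - ψ i)^2) = 0 := by linarith
    have h1 : (2:ℝ)^d * (b0 + (1/2) * (∑ i, b i) - m)^2 = 0 := by linarith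
    have h2 : ((2:ℝ)^(d-1)/2) * (∑ i, (b i - ψ i)^2) = 0 := by linarith
    have hb : ∀ i, b i = a i := by
      intro i
      have hsum : (∑ i, (b i - ψ i)^2) = 0 := by
        have : ((2:ℝ)^(d-1)/2) ≠ 0 := by positivity
        exact (mul_eq_zero.mp h2).resolve_left this
      have : ∀ j ∈ (univ : Finset (Fin d)), (b j - ψ j)^2 = 0 := by
        intro j _
        have := (Finset.sum_eq_zero_iff_of_nonneg (fun j _ => sq_nonneg (b j - ψ j))).mp hsum j (mem_univ j)
        exact this
      have := this i (mem_univ i)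
      have hbi : b i - ψ i = 0 := by
        exact pow_eq_zero_iff (by norm_num) |>.mp this
      rw [ha i]
      linarith [hbi]
    refine ⟨?_, hb⟩
    have hc : b0 + (1/2) * (∑ i, b i) - m = 0 := by
      have : (b0 + (1/2) * (∑ i, b i) - m)^2 = 0 := by
        exact (mul_eq_zero.mp h1).resolve_left hp
      exact pow_eq_zero_iff (by norm_num) |>.mp this
    have hsame : ∑ i, b i = ∑ i, a i := Finset.sum_congr rfl (fun i _ => hb i)
    have := hca
    rw [hsame] at hc
    linarith
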